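/- arXiv:1805.03297 — 2 statements merged into one kernel-verified Lean document; each statement's English description precedes it below -/
import Mathlib

section
/- For the preprojective algebra A = Π_Q(k) of type Ã_{n−1} and each vertex e_ℓ, the degree-j graded piece of e_ℓA has dimension dim_k((e_ℓA)_j) = j + 1 for every j ≥ 0; hence the Hilbert series H_{e_ℓA}(t) = Σ_j dim_k((e_ℓA)_j) t^j equals 1/(1−t)^2, and H_A(t) = n/(1−t)^2. -/
set_option linter.unusedSectionVars false
set_option linter.unusedTactic false
set_option linter.unusedVariables false
set_option maxHeartbeats 1000000


open CategoryTheory TensorProduct PowerSeries Matrix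

noncomputable section

/-! ### The preprojective algebra of type Ã_{n-1}, via its presentation -/

/-- The defining relations of the preprojective algebra of the extended Dynkin
quiver `Ã_{n-1}` among the vertex idempotents `e i`, the arrows `a i : e i → e (i+1)`
and the reversed arrows `s i : e (i+1) → e i` (indices mod `n`); the relation ideal of
the preprojective algebra is generated by `a i * s i = s (i-1) * a (i-1)`. -/
def PreprojectiveRelations (n : ℕ) [NeZero n] {C : Type} [Ring C]
    (e a s : ZMod n → C) : Prop :=
  (∀ i j, e i * e j = if i = j then e i else 0) ∧
  (∑ i, e i = 1) ∧
  (∀ i, e i * a i = a i) ∧ (∀ i, a i * e (i + 1) = a i) ∧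
  (∀ i, e (i + 1) * s i = s i) ∧ (∀ i, s i * e i = s i) ∧
  (∀ i, a i * s i = s (i - 1) * a (i - 1))

/-- `A`, equipped with its grading `𝒜` and elements `e, a, s`, is the preprojective
algebra `Π_Q(k)` of the extended Dynkin quiver `Q = Ã_{n-1}`: the preprojective
relations hold, the vertices have degree `0` and the arrows degree `1`, `A` is
generated as a `k`-algebra by vertices and arrows, and `A` is universal (initial)
among `k`-algebras with elements satisfying the preprojective relations.  Together
with generation, universality exhibits `A` as the path algebra `kQ̄` of the double
quiver modulo the ideal generated by the preprojective relations. -/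
def IsPreprojectiveAlgebraAn (k : Type) [Field k] (n : ℕ) [NeZero n]
    (A : Type) [Ring A] [Algebra k A] (𝒜 : ℕ → Submodule k A)
    (e a s : ZMod n → A) : Prop :=
  PreprojectiveRelations n e a s ∧
  (∀ i, e i ∈ 𝒜 0) ∧ (∀ i, a i ∈ 𝒜 1) ∧ (∀ i, s i ∈ 𝒜 1) ∧
  (Algebra.adjoin k (Set.range e ∪ Set.range a ∪ Set.range s) = ⊤) ∧
  (∀ (C : Type) [Ring C] [Algebra k C] (e' a' s' : ZMod n → C),
      PreprojectiveRelations n e' a' s' →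
      ∃ f : A →ₐ[k] C, (∀ i, f (e i) = e' i) ∧ (∀ i, f (a i) = a' i) ∧
        (∀ i, f (s i) = s' i))

variable (k : Type) [Field k] [IsAlgClosed k] [CharZero k]
variable (n : ℕ) [NeZero n]
variable (A : Type) [Ring A] [Algebra k A] (𝒜 : ℕ → Submodule k A) [GradedAlgebra 𝒜]
variable (e a astar : ZMod n → A)

namespace PPA

variable {k : Type} [Field k] {n : ℕ} [NeZero n]
variable {A : Type} [Ring A] [Algebra k A]

/-- ascending path of `a`'s of length `p` starting at `ℓ`. -/
def P (e a : ZMod n → A) (ℓ : ZMod n) : ℕ → A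
  | 0 => e ℓ
  | (p+1) => P e a ℓ p * a (ℓ + (p : ZMod n))

/-- descending path of `s`'s of length `q` starting at `v`. -/
def D (e s : ZMod n → A) (v : ZMod n) : ℕ → A
  | 0 => e v
  | (q+1) => D e s v q * s (v - (q : ZMod n) - 1)

def mon (e a s : ZMod n → A) (ℓ : ZMod n) (p q : ℕ) : A :=
  P e a ℓ p * D e s (ℓ + (p : ZMod n)) q

section Rel
variable {e a s : ZMod n → A} (hR : PreprojectiveRelations n e a s)
include hR

lemma e_mul_e (i j : ZMod n) : e i * e j = if i = j then e i else 0 := hR.1 i j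

lemma e_mul_a (i j : ZMod n) : e i * a j = if i = j then a j else 0 := by
  rcases eq_or_ne i j with rfl | h
  · simp [hR.2.2.1 i]
  · rw [← hR.2.2.1 j, ← mul_assoc, hR.1 i j, if_neg h, zero_mul, if_neg h]

lemma e_mul_s (i j : ZMod n) : e i * s j = if i = j + 1 then s j else 0 := by
  rcases eq_or_ne i (j + 1) with h | h
  · subst h; simp [hR.2.2.2.2.1 j]
  · rw [← hR.2.2.2.2.1 j, ← mul_assoc, hR.1 i (j+1), if_neg h, zero_mul, if_neg h]

lemma prepend_P (v : ZMod n) (p : ℕ) : a v * P e a (v + 1) p = P e a v (p + 1) := by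
  induction p with
  | zero =>
      show a v * e (v+1) = e v * a (v + ((0:ℕ) : ZMod n))
      rw [hR.2.2.2.1 v, show v + ((0:ℕ) : ZMod n) = v by push_cast; ring, hR.2.2.1 v]
  | succ p ih =>
      show a v * (P e a (v+1) p * a (v + 1 + (p : ZMod n))) = P e a v (p+1) * a (v + ((p:ℕ)+1 : ℕ))
      rw [← mul_assoc, ih]
      congr 1
      push_cast
      ring

lemma prepend_D (v : ZMod n) (q : ℕ) : s (v - 1) * D e s (v - 1) q = D e s v (q + 1) := by
  induction q with
  | zero =>
      show s (v-1) * e (v-1) = D e s v 0 * s (v - (0:ℕ) - 1)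
      rw [hR.2.2.2.2.2.1 (v-1), show v - ((0:ℕ) : ZMod n) - 1 = v - 1 by push_cast; ring]
      show s (v - 1) = e v * s (v - 1)
      rw [e_mul_s hR, if_pos (by ring)]
  | succ q ih =>
      show s (v-1) * (D e s (v-1) q * s (v - 1 - (q:ZMod n) - 1)) = D e s v (q+1) * s (v - ((q:ℕ)+1:ℕ) - 1)
      rw [← mul_assoc, ih]
      congr 1
      push_cast
      ring

/-- swap: `s (ℓ-1) * P (ℓ-1) p = P ℓ p * s (ℓ + p - 1)`. -/
lemma swap (ℓ : ZMod n) (p : ℕ) :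
    s (ℓ - 1) * P e a (ℓ - 1) p = P e a ℓ p * s (ℓ + (p : ZMod n) - 1) := by
  induction p with
  | zero =>
      show s (ℓ-1) * e (ℓ-1) = e ℓ * s (ℓ + (0:ℕ) - 1)
      rw [hR.2.2.2.2.2.1 (ℓ-1), show ℓ + ((0:ℕ):ZMod n) - 1 = ℓ - 1 by push_cast; ring]
      show s (ℓ - 1) = e ℓ * s (ℓ - 1)
      rw [e_mul_s hR, if_pos (by ring)]
  | succ p ih =>
      show s (ℓ-1) * (P e a (ℓ-1) p * a (ℓ - 1 + (p:ZMod n))) = P e a ℓ (p+1) * s (ℓ + ((p:ℕ)+1:ℕ) - 1)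
      rw [← mul_assoc, ih]
      have key : s (ℓ + (p:ZMod n) - 1) * a (ℓ - 1 + (p:ZMod n)) =
          a (ℓ + (p:ZMod n)) * s (ℓ + (p:ZMod n)) := by
        rw [show ℓ - 1 + (p:ZMod n) = ℓ + (p:ZMod n) - 1 by ring]
        have h := hR.2.2.2.2.2.2 (ℓ + (p:ZMod n))
        rw [show ℓ + (p:ZMod n) - 1 = ℓ + (p:ZMod n) - 1 from rfl] at h
        exact h.symm
      rw [mul_assoc, key, show P e a ℓ (p+1) = P e a ℓ p * a (ℓ + (p:ZMod n)) from rfl,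
        mul_assoc]
      congr 2
      push_cast
      ring

lemma e_mul_P (ℓ : ZMod n) (p : ℕ) : e ℓ * P e a ℓ p = P e a ℓ p := by
  induction p with
  | zero =>
      show e ℓ * e ℓ = e ℓ
      rw [hR.1 ℓ ℓ, if_pos rfl]
  | succ p ih =>
      show e ℓ * (P e a ℓ p * a (ℓ + (p:ZMod n))) = P e a ℓ p * a (ℓ + (p:ZMod n))
      rw [← mul_assoc, ih]

lemma e_mul_mon (ℓ : ZMod n) (p q : ℕ) :
    e ℓ * mon e a s ℓ p q = mon e a s ℓ p q := by
  unfold mon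
  rw [← mul_assoc, e_mul_P hR]

lemma a_mul_mon (ℓ : ZMod n) (p q : ℕ) :
    a ℓ * mon e a s (ℓ + 1) p q = mon e a s ℓ (p+1) q := by
  unfold mon
  rw [← mul_assoc, prepend_P hR]
  congr 2
  push_cast
  ring

lemma s_mul_mon (ℓ : ZMod n) (p q : ℕ) :
    s (ℓ - 1) * mon e a s (ℓ - 1) p q = mon e a s ℓ p (q+1) := by
  unfold mon
  rw [← mul_assoc, swap hR, mul_assoc,
    show ℓ - 1 + (p : ZMod n) = (ℓ + (p:ZMod n)) - 1 by ring,
    prepend_D hR (ℓ + (p:ZMod n))]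

end Rel

section Mem
variable {e a s : ZMod n → A} (𝒜 : ℕ → Submodule k A) [GradedAlgebra 𝒜]
variable (he : ∀ i, e i ∈ 𝒜 0) (ha : ∀ i, a i ∈ 𝒜 1) (hs : ∀ i, s i ∈ 𝒜 1)
include he

include ha in
lemma P_mem (ℓ : ZMod n) (p : ℕ) : P e a ℓ p ∈ 𝒜 p := by
  induction p with
  | zero => exact he ℓ
  | succ p ih =>
      have := SetLike.mul_mem_graded ih (ha (ℓ + (p : ZMod n)))
      exact this

include hs in
lemma D_mem (v : ZMod n) (q : ℕ) : D e s v q ∈ 𝒜 q := by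
  induction q with
  | zero => exact he v
  | succ q ih =>
      have := SetLike.mul_mem_graded ih (hs (v - (q : ZMod n) - 1))
      exact this

include ha hs in
lemma mon_mem (ℓ : ZMod n) (p q : ℕ) : mon e a s ℓ p q ∈ 𝒜 (p + q) :=
  SetLike.mul_mem_graded (P_mem (e := e) (a := a) 𝒜 he ha ℓ p) (D_mem (e := e) (s := s) 𝒜 he hs (ℓ + (p:ZMod n)) q)

end Mem

section Span

variable (k)
variable (e a s : ZMod n → A)

/-- span of all normalized monomials starting at vertex `ℓ`. -/
def Mall (ℓ : ZMod n) : Submodule k A :=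
  Submodule.span k {x | ∃ p q, x = mon e a s ℓ p q}

/-- span of the degree-`j` normalized monomials starting at vertex `ℓ`. -/
def Mdeg (ℓ : ZMod n) (j : ℕ) : Submodule k A :=
  Submodule.span k (Set.range fun p : Fin (j+1) => mon e a s ℓ p (j - p))

variable {k e a s}

lemma mul_span_mem {c x : A} {S : Set A} {N : Submodule k A}
    (h : ∀ y ∈ S, c * y ∈ N) (hx : x ∈ Submodule.span k S) : c * x ∈ N := by
  have hle : Submodule.span k S ≤ N.comap (LinearMap.mulLeft k c) :=
    Submodule.span_le.2 (fun y hy => h y hy)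
  exact hle hx

variable (hR : PreprojectiveRelations n e a s)
include hR

lemma mon_zero_zero (ℓ : ZMod n) : mon e a s ℓ 0 0 = e ℓ := by
  show e ℓ * e (ℓ + ((0:ℕ) : ZMod n)) = e ℓ
  rw [show ℓ + ((0:ℕ) : ZMod n) = ℓ by push_cast; ring, hR.1, if_pos rfl]

lemma list_mem (l : List A)
    (hl : ∀ y ∈ l, y ∈ Set.range e ∪ Set.range a ∪ Set.range s) :
    ∀ ℓ : ZMod n, e ℓ * l.prod ∈ Mall k e a s ℓ := by
  induction l with
  | nil =>
      intro ℓ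
      rw [List.prod_nil, mul_one]
      exact Submodule.subset_span ⟨0, 0, (mon_zero_zero hR ℓ).symm⟩
  | cons g t ih =>
      intro ℓ
      have hg := hl g (List.mem_cons_self)
      have ht : ∀ y ∈ t, y ∈ Set.range e ∪ Set.range a ∪ Set.range s :=
        fun y hy => hl y (List.mem_cons_of_mem g hy)
      rw [List.prod_cons, ← mul_assoc]
      rcases hg with (⟨i, rfl⟩ | ⟨i, rfl⟩) | ⟨i, rfl⟩
      · rw [e_mul_e hR]
        split_ifs with h
        · exact ih ht ℓ
        · rw [zero_mul]; exact Submodule.zero_mem _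
      · rw [e_mul_a hR]
        split_ifs with h
        · subst h
          rw [← hR.2.2.2.1 ℓ, mul_assoc]
          refine mul_span_mem (fun y hy => ?_) (ih ht (ℓ + 1))
          obtain ⟨p, q, rfl⟩ := hy
          rw [a_mul_mon hR]
          exact Submodule.subset_span ⟨p+1, q, rfl⟩
        · rw [zero_mul]; exact Submodule.zero_mem _
      · rw [e_mul_s hR]
        split_ifs with h
        · have hi : i = ℓ - 1 := by rw [h]; ring
          subst hi
          rw [← hR.2.2.2.2.2.1 (ℓ - 1), mul_assoc]
          refine mul_span_mem (fun y hy => ?_) (ih ht (ℓ - 1))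
          obtain ⟨p, q, rfl⟩ := hy
          rw [s_mul_mon hR]
          exact Submodule.subset_span ⟨p, q+1, rfl⟩
        · rw [zero_mul]; exact Submodule.zero_mem _

lemma e_mul_mem_Mall
    (hgen : Algebra.adjoin k (Set.range e ∪ Set.range a ∪ Set.range s) = ⊤)
    (ℓ : ZMod n) (x : A) : e ℓ * x ∈ Mall k e a s ℓ := by
  have hx : x ∈ Submodule.span k
      ((Submonoid.closure (Set.range e ∪ Set.range a ∪ Set.range s) : Submonoid A) : Set A) := by
    rw [← Algebra.adjoin_eq_span]
    rw [hgen]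
    trivial
  refine Submodule.span_induction (p := fun x _ => e ℓ * x ∈ Mall k e a s ℓ)
    (fun y hy => ?_) ?_ (fun y z _ _ hy hz => ?_) (fun c y _ hy => ?_) hx
  · obtain ⟨l, hl, rfl⟩ := Submonoid.exists_list_of_mem_closure hy
    exact list_mem hR l hl ℓ
  · show e ℓ * 0 ∈ _
    rw [mul_zero]; exact Submodule.zero_mem _
  · show e ℓ * (y + z) ∈ _
    rw [mul_add]; exact Submodule.add_mem _ hy hz
  · show e ℓ * (c • y) ∈ _
    rw [mul_smul_comm]; exact Submodule.smul_mem _ _ hy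

end Span

section Filter

variable (𝒜 : ℕ → Submodule k A) [GradedAlgebra 𝒜]
variable {e a s : ZMod n → A}
variable (he : ∀ i, e i ∈ 𝒜 0) (ha : ∀ i, a i ∈ 𝒜 1) (hs : ∀ i, s i ∈ 𝒜 1)
include he ha hs

lemma Mall_filter (ℓ : ZMod n) (j : ℕ) {x : A}
    (hx1 : x ∈ Mall k e a s ℓ) (hx2 : x ∈ 𝒜 j) : x ∈ Mdeg k e a s ℓ j := by
  obtain ⟨N, c, w, hw⟩ := Submodule.mem_span_set'.1 hx1
  have hx : x = GradedRing.proj 𝒜 j x := by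
    rw [GradedRing.proj_apply, DirectSum.decompose_of_mem_same 𝒜 hx2]
  rw [hx, ← hw, map_sum]
  refine Submodule.sum_mem _ (fun i _ => ?_)
  obtain ⟨p, q, hpq⟩ := (w i).2
  have hmem : c i • (w i : A) ∈ 𝒜 (p + q) := by
    rw [hpq]; exact Submodule.smul_mem _ _ (mon_mem 𝒜 he ha hs ℓ p q)
  by_cases hj : p + q = j
  · subst hj
    rw [GradedRing.proj_apply, DirectSum.decompose_of_mem_same 𝒜 hmem]
    refine Submodule.smul_mem _ _ (Submodule.subset_span ?_)
    refine ⟨⟨p, by omega⟩, ?_⟩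
    simp only [hpq]
    congr 1
    omega
  · rw [GradedRing.proj_apply, DirectSum.decompose_of_mem_ne 𝒜 hmem hj]
    exact Submodule.zero_mem _

end Filter

section Model

variable (k n)

/-- The concrete model: matrices over `k[x,y]`. -/
abbrev Cmod : Type := Matrix (ZMod n) (ZMod n) (MvPolynomial (Fin 2) k)

def eC (i : ZMod n) : Cmod k n := Matrix.single i i 1
def aC (i : ZMod n) : Cmod k n := Matrix.single i (i+1) (MvPolynomial.X 0)
def sC (i : ZMod n) : Cmod k n := Matrix.single (i+1) i (MvPolynomial.X 1)

lemma rel_model : PreprojectiveRelations n (eC k n) (aC k n) (sC k n) := by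
  refine ⟨fun i j => ?_, ?_, fun i => ?_, fun i => ?_, fun i => ?_, fun i => ?_, fun i => ?_⟩
  · rcases eq_or_ne i j with rfl | h
    · rw [if_pos rfl]
      unfold eC
      rw [Matrix.single_mul_single_same, one_mul]
    · rw [if_neg h]
      unfold eC
      rw [Matrix.single_mul_single_of_ne (h := h)]
  · refine Matrix.ext fun i j => ?_
    rw [Matrix.sum_apply]
    simp [eC, Matrix.single, Matrix.one_apply, ite_and, Finset.sum_ite_eq, Finset.sum_ite_eq']
  · unfold eC aC
    rw [Matrix.single_mul_single_same, one_mul]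
  · unfold eC aC
    rw [Matrix.single_mul_single_same, mul_one]
  · unfold eC sC
    rw [Matrix.single_mul_single_same, one_mul]
  · unfold eC sC
    rw [Matrix.single_mul_single_same, mul_one]
  · unfold aC sC
    rw [Matrix.single_mul_single_same,
      show i - 1 + 1 = i by ring, Matrix.single_mul_single_same, mul_comm]

end Model

section Image

variable {e a s : ZMod n → A}
variable (hR : PreprojectiveRelations n e a s)
variable (f : A →ₐ[k] Cmod k n)
variable (hfe : ∀ i, f (e i) = eC k n i) (hfa : ∀ i, f (a i) = aC k n i)
variable (hfs : ∀ i, f (s i) = sC k n i)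

include hfe hfa in
lemma f_P (ℓ : ZMod n) (p : ℕ) :
    f (P e a ℓ p) = Matrix.single ℓ (ℓ + (p : ZMod n)) (MvPolynomial.X 0 ^ p) := by
  induction p with
  | zero =>
      show f (e ℓ) = _
      rw [hfe ℓ, show ℓ + ((0:ℕ) : ZMod n) = ℓ by push_cast; ring, pow_zero]
      rfl
  | succ p ih =>
      show f (P e a ℓ p * a (ℓ + (p : ZMod n))) = _
      rw [_root_.map_mul, ih, hfa]
      unfold aC
      rw [Matrix.single_mul_single_same, ← pow_succ]
      congr 1
      push_cast
      ring

include hfe hfs in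
lemma f_D (v : ZMod n) (q : ℕ) :
    f (D e s v q) = Matrix.single v (v - (q : ZMod n)) (MvPolynomial.X 1 ^ q) := by
  induction q with
  | zero =>
      show f (e v) = _
      rw [hfe v, show v - ((0:ℕ) : ZMod n) = v by push_cast; ring, pow_zero]
      rfl
  | succ q ih =>
      show f (D e s v q * s (v - (q : ZMod n) - 1)) = _
      rw [_root_.map_mul, ih, hfs]
      unfold sC
      rw [show v - (q : ZMod n) - 1 + 1 = v - (q : ZMod n) by ring,
        Matrix.single_mul_single_same, ← pow_succ]
      congr 1
      push_cast
      ring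

include hfe hfa hfs in
lemma f_mon (ℓ : ZMod n) (p q : ℕ) :
    f (mon e a s ℓ p q) = Matrix.single ℓ (ℓ + (p : ZMod n) - (q : ZMod n))
      (MvPolynomial.X 0 ^ p * MvPolynomial.X 1 ^ q) := by
  unfold mon
  rw [_root_.map_mul, f_P f hfe hfa, f_D f hfe hfs, Matrix.single_mul_single_same]

end Image

section LI

lemma model_li {ι : Type} [Fintype ι] (r c : ι → ZMod n) (u v : ι → ℕ)
    (hinj : ∀ i i', r i = r i' → c i = c i' → u i = u i' → v i = v i' → i = i') :
    LinearIndependent k (fun i : ι =>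
      (Matrix.single (r i) (c i) (MvPolynomial.X 0 ^ u i * MvPolynomial.X 1 ^ v i) : Cmod k n)) := by
  classical
  rw [Fintype.linearIndependent_iff]
  intro g hg i0
  have h1 : ∑ i : ι, g i • ((Matrix.single (r i) (c i) (MvPolynomial.X 0 ^ u i * MvPolynomial.X 1 ^ v i) :
      Cmod k n) (r i0) (c i0)) = 0 := by
    have h := congrFun (congrFun hg (r i0)) (c i0)
    rw [Matrix.sum_apply] at h
    simpa [Matrix.smul_apply] using h
  have h2 := congrArg (MvPolynomial.coeff
      (Finsupp.single (0 : Fin 2) (u i0) + Finsupp.single (1 : Fin 2) (v i0))) h1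
  rw [MvPolynomial.coeff_sum] at h2
  simp only [MvPolynomial.coeff_smul, MvPolynomial.coeff_zero] at h2
  have key : ∀ i : ι, g i • MvPolynomial.coeff
      (Finsupp.single (0 : Fin 2) (u i0) + Finsupp.single (1 : Fin 2) (v i0))
      ((Matrix.single (r i) (c i) (MvPolynomial.X 0 ^ u i * MvPolynomial.X 1 ^ v i) : Cmod k n) (r i0) (c i0)) =
      if i = i0 then g i else 0 := by
    intro i
    by_cases hrc : r i = r i0 ∧ c i = c i0
    · have hentry : (Matrix.single (r i) (c i) (MvPolynomial.X 0 ^ u i * MvPolynomial.X 1 ^ v i) : Cmod k n)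
          (r i0) (c i0) = MvPolynomial.X 0 ^ u i * MvPolynomial.X 1 ^ v i := by
        rw [← hrc.1, ← hrc.2]
        exact Matrix.single_apply_same _ _ _
      rw [hentry, MvPolynomial.X_pow_eq_monomial, MvPolynomial.X_pow_eq_monomial, MvPolynomial.monomial_mul, one_mul,
        MvPolynomial.coeff_monomial]
      by_cases huv : u i = u i0 ∧ v i = v i0
      · rw [if_pos (by rw [huv.1, huv.2]),
          if_pos (hinj i i0 hrc.1 hrc.2 huv.1 huv.2), smul_eq_mul, mul_one]
      · have hne : Finsupp.single (0 : Fin 2) (u i) + Finsupp.single (1 : Fin 2) (v i) ≠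
            Finsupp.single (0 : Fin 2) (u i0) + Finsupp.single (1 : Fin 2) (v i0) := by
          intro hcon
          refine huv ⟨?_, ?_⟩
          · have := DFunLike.congr_fun hcon (0 : Fin 2)
            simpa [Finsupp.single_apply] using this
          · have := DFunLike.congr_fun hcon (1 : Fin 2)
            simpa [Finsupp.single_apply] using this
        rw [if_neg hne, smul_zero, if_neg]
        intro hcon
        subst hcon
        exact huv ⟨rfl, rfl⟩
    · have hentry : (Matrix.single (r i) (c i) (MvPolynomial.X 0 ^ u i * MvPolynomial.X 1 ^ v i) : Cmod k n)
          (r i0) (c i0) = 0 := by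
        rcases not_and_or.1 hrc with h | h
        · exact Matrix.single_apply_of_ne _ _ _ _ _ (by tauto)
        · exact Matrix.single_apply_of_ne _ _ _ _ _ (by tauto)
      rw [hentry, MvPolynomial.coeff_zero, smul_zero, if_neg]
      intro hcon
      subst hcon
      exact hrc ⟨rfl, rfl⟩
  rw [Finset.sum_congr rfl (fun i _ => key i), Finset.sum_ite_eq' Finset.univ i0 g] at h2
  simpa using h2

end LI

section Main

variable (𝒜 : ℕ → Submodule k A) [GradedAlgebra 𝒜]
variable {e a s : ZMod n → A}
variable (hR : PreprojectiveRelations n e a s)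
variable (he : ∀ i, e i ∈ 𝒜 0) (ha : ∀ i, a i ∈ 𝒜 1) (hs : ∀ i, s i ∈ 𝒜 1)
variable (hgen : Algebra.adjoin k (Set.range e ∪ Set.range a ∪ Set.range s) = ⊤)
variable (f : A →ₐ[k] Cmod k n)
variable (hfe : ∀ i, f (e i) = eC k n i) (hfa : ∀ i, f (a i) = aC k n i)
variable (hfs : ∀ i, f (s i) = sC k n i)

include hR he ha hs hgen in
lemma map_le_Mdeg (ℓ : ZMod n) (j : ℕ) :
    (𝒜 j).map (LinearMap.mulLeft k (e ℓ)) ≤ Mdeg k e a s ℓ j := by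
  rintro _ ⟨x, hx, rfl⟩
  show e ℓ * x ∈ _
  refine Mall_filter 𝒜 he ha hs ℓ j (e_mul_mem_Mall hR hgen ℓ x) ?_
  simpa using SetLike.mul_mem_graded (he ℓ) hx

lemma findim_Mdeg (ℓ : ZMod n) (j : ℕ) : FiniteDimensional k (Mdeg k e a s ℓ j) :=
  FiniteDimensional.span_of_finite k (Set.finite_range _)

lemma finrank_Mdeg_le (ℓ : ZMod n) (j : ℕ) :
    Module.finrank k (Mdeg k e a s ℓ j) ≤ j + 1 := by
  have h := finrank_range_le_card (R := k)
    (b := fun p : Fin (j+1) => mon e a s ℓ (p : ℕ) (j - (p : ℕ)))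
  rw [Fintype.card_fin] at h
  exact h

include hR he ha hs in
lemma mon_mem_map (ℓ : ZMod n) (j : ℕ) (p : Fin (j+1)) :
    mon e a s ℓ (p : ℕ) (j - (p : ℕ)) ∈ (𝒜 j).map (LinearMap.mulLeft k (e ℓ)) := by
  refine ⟨mon e a s ℓ (p : ℕ) (j - (p : ℕ)), ?_, ?_⟩
  · have h := mon_mem 𝒜 he ha hs ℓ (p : ℕ) (j - (p : ℕ))
    rwa [show (p : ℕ) + (j - (p : ℕ)) = j by omega] at h
  · show e ℓ * _ = _
    exact e_mul_mon hR ℓ _ _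

include hR he ha hs hgen hfe hfa hfs in
lemma main_finrank (ℓ : ZMod n) (j : ℕ) :
    Module.finrank k ((𝒜 j).map (LinearMap.mulLeft k (e ℓ))) = j + 1 := by
  set N := (𝒜 j).map (LinearMap.mulLeft k (e ℓ)) with hN
  have hfinM : FiniteDimensional k (Mdeg k e a s ℓ j) := findim_Mdeg ℓ j
  have hle := map_le_Mdeg 𝒜 hR he ha hs hgen ℓ j
  have hfinN : FiniteDimensional k N := Submodule.finiteDimensional_of_le hle
  have hub : Module.finrank k N ≤ j + 1 :=
    le_trans (Submodule.finrank_mono hle) (finrank_Mdeg_le ℓ j)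
  -- lower bound
  have hli : LinearIndependent k
      (fun p : Fin (j+1) => f (mon e a s ℓ (p : ℕ) (j - (p : ℕ)))) := by
    have heq : (fun p : Fin (j+1) => f (mon e a s ℓ (p : ℕ) (j - (p : ℕ)))) =
        fun p : Fin (j+1) => (Matrix.single ℓ
          (ℓ + ((p : ℕ) : ZMod n) - (((j - (p : ℕ)) : ℕ) : ZMod n))
          (MvPolynomial.X 0 ^ (p : ℕ) * MvPolynomial.X 1 ^ (j - (p : ℕ))) : Cmod k n) := by
      funext p
      exact f_mon f hfe hfa hfs ℓ (p : ℕ) (j - (p : ℕ))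
    rw [heq]
    exact model_li _ _ _ _ (fun i i' _ _ hu _ => Fin.ext hu)
  have hspan_le : Submodule.span k
      (Set.range fun p : Fin (j+1) => f (mon e a s ℓ (p : ℕ) (j - (p : ℕ)))) ≤
      N.map f.toLinearMap := by
    rw [Submodule.span_le]
    rintro _ ⟨p, rfl⟩
    exact Submodule.mem_map_of_mem (mon_mem_map 𝒜 hR he ha hs ℓ j p)
  have hlb : j + 1 ≤ Module.finrank k N := by
    have h1 : Module.finrank k (Submodule.span k
        (Set.range fun p : Fin (j+1) => f (mon e a s ℓ (p : ℕ) (j - (p : ℕ))))) = j + 1 := by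
      rw [finrank_span_eq_card hli, Fintype.card_fin]
    have := Module.Finite.map N f.toLinearMap
    calc j + 1 = _ := h1.symm
      _ ≤ Module.finrank k (N.map f.toLinearMap) := Submodule.finrank_mono hspan_le
      _ ≤ Module.finrank k N := Submodule.finrank_map_le f.toLinearMap N
  omega

/-- span of all degree-`j` monomials at all vertices. -/
def MdegAll (j : ℕ) : Submodule k A :=
  Submodule.span k (Set.range fun z : ZMod n × Fin (j+1) => mon e a s z.1 (z.2 : ℕ) (j - (z.2 : ℕ)))

include hR he ha hs hgen in
lemma 𝒜_le_MdegAll (j : ℕ) : 𝒜 j ≤ MdegAll (k := k) (e := e) (a := a) (s := s) j := by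
  intro x hx
  have hx1 : x = ∑ ℓ : ZMod n, e ℓ * x := by
    rw [← Finset.sum_mul, hR.2.1, one_mul]
  rw [hx1]
  refine Submodule.sum_mem _ (fun ℓ _ => ?_)
  have h1 : e ℓ * x ∈ Mdeg k e a s ℓ j := by
    refine Mall_filter 𝒜 he ha hs ℓ j (e_mul_mem_Mall hR hgen ℓ x) ?_
    simpa using SetLike.mul_mem_graded (he ℓ) hx
  refine Submodule.span_le.2 ?_ h1
  rintro _ ⟨p, rfl⟩
  exact Submodule.subset_span ⟨(ℓ, p), rfl⟩

include hR he ha hs hgen hfe hfa hfs in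
lemma total_finrank (j : ℕ) : Module.finrank k (𝒜 j) = n * (j + 1) := by
  have hle := 𝒜_le_MdegAll 𝒜 hR he ha hs hgen j
  have hfinM : FiniteDimensional k (MdegAll (k := k) (e := e) (a := a) (s := s) j) :=
    FiniteDimensional.span_of_finite k (Set.finite_range _)
  have hfinA : FiniteDimensional k (𝒜 j) := Submodule.finiteDimensional_of_le hle
  have hub : Module.finrank k (𝒜 j) ≤ n * (j + 1) := by
    have h := finrank_range_le_card (R := k)
      (b := fun z : ZMod n × Fin (j+1) => mon e a s z.1 (z.2 : ℕ) (j - (z.2 : ℕ)))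
    have hcard : Fintype.card (ZMod n × Fin (j+1)) = n * (j + 1) := by
      rw [Fintype.card_prod, ZMod.card, Fintype.card_fin]
    refine le_trans (Submodule.finrank_mono hle) ?_
    rw [← hcard]
    exact h
  have hli : LinearIndependent k
      (fun z : ZMod n × Fin (j+1) => f (mon e a s z.1 (z.2 : ℕ) (j - (z.2 : ℕ)))) := by
    have heq : (fun z : ZMod n × Fin (j+1) => f (mon e a s z.1 (z.2 : ℕ) (j - (z.2 : ℕ)))) =
        fun z : ZMod n × Fin (j+1) => (Matrix.single z.1
          (z.1 + ((z.2 : ℕ) : ZMod n) - (((j - (z.2 : ℕ)) : ℕ) : ZMod n))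
          (MvPolynomial.X 0 ^ (z.2 : ℕ) * MvPolynomial.X 1 ^ (j - (z.2 : ℕ))) : Cmod k n) := by
      funext z
      exact f_mon f hfe hfa hfs z.1 (z.2 : ℕ) (j - (z.2 : ℕ))
    rw [heq]
    exact model_li _ _ _ _ (fun i i' hr _ hu _ => Prod.ext hr (Fin.ext hu))
  have hspan_le : Submodule.span k
      (Set.range fun z : ZMod n × Fin (j+1) => f (mon e a s z.1 (z.2 : ℕ) (j - (z.2 : ℕ)))) ≤
      (𝒜 j).map f.toLinearMap := by
    rw [Submodule.span_le]
    rintro _ ⟨z, rfl⟩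
    refine Submodule.mem_map_of_mem ?_
    have h := mon_mem 𝒜 he ha hs z.1 (z.2 : ℕ) (j - (z.2 : ℕ))
    rwa [show (z.2 : ℕ) + (j - (z.2 : ℕ)) = j by omega] at h
  have hlb : n * (j + 1) ≤ Module.finrank k (𝒜 j) := by
    have h1 : Module.finrank k (Submodule.span k
        (Set.range fun z : ZMod n × Fin (j+1) =>
          f (mon e a s z.1 (z.2 : ℕ) (j - (z.2 : ℕ))))) = n * (j + 1) := by
      rw [finrank_span_eq_card hli, Fintype.card_prod, ZMod.card, Fintype.card_fin]
    have := Module.Finite.map (𝒜 j) f.toLinearMap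
    calc n * (j + 1) = _ := h1.symm
      _ ≤ Module.finrank k ((𝒜 j).map f.toLinearMap) := Submodule.finrank_mono hspan_le
      _ ≤ Module.finrank k (𝒜 j) := Submodule.finrank_map_le f.toLinearMap (𝒜 j)
  omega

end Main

section PS

variable (k)

lemma mul_one_sub_X (d : ℕ → k) :
    (PowerSeries.mk d) * (1 - PowerSeries.X) =
      PowerSeries.mk (fun j => d j - if h : j = 0 then 0 else d (j - 1)) := by
  have h : (PowerSeries.mk d) * (1 - PowerSeries.X) =
      PowerSeries.mk d - PowerSeries.mk d * PowerSeries.X := by ring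
  rw [h]
  refine PowerSeries.ext fun m => ?_
  rw [map_sub, PowerSeries.coeff_mk, PowerSeries.coeff_mk]
  cases m with
  | zero => rw [PowerSeries.coeff_zero_mul_X]; simp
  | succ m => rw [PowerSeries.coeff_succ_mul_X, PowerSeries.coeff_mk]; simp

lemma geom_series_sq : (PowerSeries.mk fun j => ((j : k) + 1)) * (1 - PowerSeries.X) ^ 2 = 1 := by
  have h1 : (PowerSeries.mk fun j => ((j : k) + 1)) * (1 - PowerSeries.X) =
      PowerSeries.mk (fun _ => (1 : k)) := by
    rw [mul_one_sub_X]
    refine PowerSeries.ext fun m => ?_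
    rw [PowerSeries.coeff_mk, PowerSeries.coeff_mk]
    cases m with
    | zero => simp
    | succ m =>
        simp only [Nat.succ_ne_zero, dif_neg, not_false_iff, Nat.add_sub_cancel]
        push_cast
        ring
  have h2 : (PowerSeries.mk fun _ => (1 : k)) * (1 - PowerSeries.X) = 1 := by
    rw [mul_one_sub_X]
    refine PowerSeries.ext fun m => ?_
    rw [PowerSeries.coeff_mk]
    cases m with
    | zero => simp
    | succ m => simp [PowerSeries.coeff_one]
  rw [sq, ← mul_assoc, h1, h2]

end PS
end PPA

/-- For the preprojective algebra `A = Π_Q(k)` of type `Ã_{n-1}` and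
each vertex `e ℓ`, the degree-`j` graded piece of `e_ℓ·A` has dimension `j + 1`; hence
the Hilbert series of `e_ℓ·A` equals `1/(1-t)²` and the Hilbert series of `A` equals
`n/(1-t)²`. -/
theorem preprojective_hilbert_series
    (hn : 3 ≤ n)
    (hA : IsPreprojectiveAlgebraAn k n A 𝒜 e a astar) :
    (∀ (ℓ : ZMod n) (j : ℕ),
        Module.finrank k ((𝒜 j).map (LinearMap.mulLeft k (e ℓ))) = j + 1) ∧
    (∀ ℓ : ZMod n,
        (PowerSeries.mk fun j =>
            (Module.finrank k ((𝒜 j).map (LinearMap.mulLeft k (e ℓ))) : k)) *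
          (1 - PowerSeries.X) ^ 2 = 1) ∧
    ((PowerSeries.mk fun j => (Module.finrank k (𝒜 j) : k)) *
        (1 - PowerSeries.X) ^ 2 = (n : PowerSeries k)) := by
  obtain ⟨hR, he, ha, hs, hgen, huniv⟩ := hA
  obtain ⟨f, hfe, hfa, hfs⟩ := huniv (PPA.Cmod k n) (PPA.eC k n) (PPA.aC k n) (PPA.sC k n)
    (PPA.rel_model k n)
  have S1 : ∀ (ℓ : ZMod n) (j : ℕ),
      Module.finrank k ((𝒜 j).map (LinearMap.mulLeft k (e ℓ))) = j + 1 :=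
    fun ℓ j => PPA.main_finrank 𝒜 hR he ha hs hgen f hfe hfa hfs ℓ j
  refine ⟨S1, fun ℓ => ?_, ?_⟩
  · have hfun : (PowerSeries.mk fun j =>
        (Module.finrank k ((𝒜 j).map (LinearMap.mulLeft k (e ℓ))) : k)) =
        PowerSeries.mk fun j => ((j : k) + 1) := by
      refine PowerSeries.ext fun m => ?_
      rw [PowerSeries.coeff_mk, PowerSeries.coeff_mk, S1 ℓ m]
      push_cast
      ring
    rw [hfun]
    exact PPA.geom_series_sq k
  · have hfun : (PowerSeries.mk fun j => (Module.finrank k (𝒜 j) : k)) =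
        PowerSeries.C (n : k) * PowerSeries.mk fun j => ((j : k) + 1) := by
      refine PowerSeries.ext fun m => ?_
      rw [PowerSeries.coeff_C_mul, PowerSeries.coeff_mk, PowerSeries.coeff_mk,
        PPA.total_finrank 𝒜 hR he ha hs hgen f hfe hfa hfs m]
      push_cast
      ring
    rw [hfun, mul_assoc, PPA.geom_series_sq k, mul_one]
    exact map_natCast (PowerSeries.C) n

end
end

section
/- For A = Π_Q(k) with Q = Ã_{n−1}, the graded automorphism group Aut_gr(A) is isomorphic to the semidirect product D_{2n} ⋉ N, where N = {g ∈ Aut_gr(A) : g(e_i) = e_i for all i = 1,…,n} is a normal subgroup of Aut_gr(A) and D_{2n} is the dihedral group of order 2n acting as the symmetries of the underlying n-cycle permuting the vertices e_1,…,e_n; in particular every graded automorphism of A is the composition of a dihedral symmetry of the vertex set with an element of N, and N has finite index in Aut_gr(A). -/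
open CategoryTheory TensorProduct PowerSeries Matrix

noncomputable section

/-! ### The graded automorphism group -/

/-- The group of graded algebra automorphisms of `A` (those mapping each `𝒜 j` onto
itself). -/
def gradedAut (k : Type) [Field k] (A : Type) [Ring A] [Algebra k A]
    (𝒜 : ℕ → Submodule k A) : Subgroup (A ≃ₐ[k] A) where
  carrier := {g | ∀ j, Submodule.map (g.toLinearMap) (𝒜 j) = 𝒜 j}
  one_mem' := by
    intro j
    have h : (1 : A ≃ₐ[k] A).toLinearMap = LinearMap.id := rfl
    rw [h, Submodule.map_id]
  mul_mem' := by
    intro g h hg hh j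
    have hc : (g * h).toLinearMap = g.toLinearMap.comp h.toLinearMap := rfl
    rw [hc, Submodule.map_comp, hh j, hg j]
  inv_mem' := by
    intro g hg j
    conv_lhs => rw [← hg j, ← Submodule.map_comp]
    have h : (g⁻¹).toLinearMap.comp g.toLinearMap = LinearMap.id := by
      ext x
      exact g.symm_apply_apply x
    rw [h, Submodule.map_id]

/-- The subgroup of graded automorphisms fixing each of the idempotents `e i`. -/
def vertexFixing (k : Type) [Field k] (A : Type) [Ring A] [Algebra k A]
    (𝒜 : ℕ → Submodule k A) {ι : Type} (e : ι → A) :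
    Subgroup ↥(gradedAut k A 𝒜) where
  carrier := {g | ∀ i, (g : A ≃ₐ[k] A) (e i) = e i}
  one_mem' := fun _ => rfl
  mul_mem' := by
    intro g h hg hh i
    have hc : ((g * h : ↥(gradedAut k A 𝒜)) : A ≃ₐ[k] A) (e i)
        = (g : A ≃ₐ[k] A) ((h : A ≃ₐ[k] A) (e i)) := rfl
    rw [hc, hh i, hg i]
  inv_mem' := by
    intro g hg i
    have h := hg i
    calc ((g⁻¹ : ↥(gradedAut k A 𝒜)) : A ≃ₐ[k] A) (e i)
        = ((g⁻¹ : ↥(gradedAut k A 𝒜)) : A ≃ₐ[k] A) ((g : A ≃ₐ[k] A) (e i)) := by rw [h]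
      _ = e i := (g : A ≃ₐ[k] A).symm_apply_apply (e i)


/-- the dihedral action on `ZMod n` -/
def dihAct (n : ℕ) : DihedralGroup n →* Equiv.Perm (ZMod n) where
  toFun d := match d with
    | .r i => ⟨fun x => x - i, fun x => x + i, fun x => by ring_nf, fun x => by ring_nf⟩
    | .sr i => ⟨fun x => i - x, fun x => i - x, fun x => by ring_nf, fun x => by ring_nf⟩
  map_one' := by
    ext x
    show x - 0 = x
    ring
  map_mul' d d' := by
    rcases d with i | i <;> rcases d' with j | j <;> ext x <;>
      simp only [DihedralGroup.r_mul_r, DihedralGroup.r_mul_sr, DihedralGroup.sr_mul_r,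
        DihedralGroup.sr_mul_sr, Equiv.Perm.mul_apply, Equiv.coe_fn_mk] <;> ring

theorem dihAct_r (n : ℕ) (i x : ZMod n) : dihAct n (.r i) x = x - i := rfl
theorem dihAct_sr (n : ℕ) (i x : ZMod n) : dihAct n (.sr i) x = i - x := rfl

theorem dihAct_injective (n : ℕ) (hn : 3 ≤ n) : Function.Injective (dihAct n) := by
  have h2 : (2 : ZMod n) ≠ 0 := by
    haveI : NeZero n := ⟨by omega⟩
    intro h
    have h2' : ((2 : ℕ) : ZMod n) = 0 := by exact_mod_cast h
    rw [ZMod.natCast_eq_zero_iff] at h2'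
    have := Nat.le_of_dvd (by norm_num) h2'
    omega
  intro d d' h
  rcases d with i | i <;> rcases d' with j | j
  · have h0 := congrArg (fun p : Equiv.Perm (ZMod n) => p 0) h
    simp only [dihAct_r] at h0
    rw [show i = j by linear_combination -h0]
  · have h0 := congrArg (fun p : Equiv.Perm (ZMod n) => p 0) h
    have h1 := congrArg (fun p : Equiv.Perm (ZMod n) => p 1) h
    simp only [dihAct_r, dihAct_sr] at h0 h1
    exact absurd (by linear_combination h1 - h0) h2
  · have h0 := congrArg (fun p : Equiv.Perm (ZMod n) => p 0) h
    have h1 := congrArg (fun p : Equiv.Perm (ZMod n) => p 1) h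
    simp only [dihAct_r, dihAct_sr] at h0 h1
    exact absurd (by linear_combination h0 - h1) h2
  · have h0 := congrArg (fun p : Equiv.Perm (ZMod n) => p 0) h
    simp only [dihAct_sr] at h0
    rw [show i = j by linear_combination h0]
section
variable (k : Type) [Field k] (n : ℕ) [NeZero n]

theorem matrixRelations :
    PreprojectiveRelations n (C := Matrix (ZMod n) (ZMod n) k)
      (fun i => Matrix.single i i 1)
      (fun i => Matrix.single i (i+1) 1)
      (fun i => Matrix.single (i+1) i 1) := by
  refine ⟨fun i j => ?_, ?_, fun i => ?_, fun i => ?_, fun i => ?_, fun i => ?_, fun i => ?_⟩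
  · show Matrix.single i i 1 * Matrix.single j j 1 = _
    by_cases h : i = j
    · subst h; simp
    · rw [if_neg h]
      exact Matrix.single_mul_single_of_ne (h := h) ..
  · ext p q
    simp [Matrix.sum_apply, Matrix.single, Matrix.one_apply, ite_and]
  · show Matrix.single i i 1 * Matrix.single i (i+1) 1 = _
    simp
  · show Matrix.single i (i+1) 1 * Matrix.single (i+1) (i+1) 1 = _
    simp
  · show Matrix.single (i+1) (i+1) 1 * Matrix.single (i+1) i 1 = _
    simp
  · show Matrix.single (i+1) i 1 * Matrix.single i i 1 = _
    simp
  · show Matrix.single i (i+1) 1 * Matrix.single (i+1) i 1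
      = Matrix.single (i-1+1) (i-1) 1 * Matrix.single (i-1) (i-1+1) 1
    rw [Matrix.single_mul_single_same, Matrix.single_mul_single_same, sub_add_cancel]

end

section
variable {k : Type} [Field k] {n : ℕ} [NeZero n]
variable {A : Type} [Ring A] [Algebra k A] {𝒜 : ℕ → Submodule k A}
variable {e a s : ZMod n → A}

theorem exists_matrix_hom (hA : IsPreprojectiveAlgebraAn k n A 𝒜 e a s) :
    ∃ f : A →ₐ[k] Matrix (ZMod n) (ZMod n) k,
      (∀ i, f (e i) = Matrix.single i i 1) ∧
      (∀ i, f (a i) = Matrix.single i (i+1) 1) ∧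
      (∀ i, f (s i) = Matrix.single (i+1) i 1) :=
  hA.2.2.2.2.2 _ _ _ _ (matrixRelations k n)

theorem e_linearIndependent (hA : IsPreprojectiveAlgebraAn k n A 𝒜 e a s) :
    LinearIndependent k e := by
  obtain ⟨f, hfe, -, -⟩ := exists_matrix_hom hA
  apply LinearIndependent.of_comp f.toLinearMap
  have h1 : LinearIndependent k
      (fun i : ZMod n => (Matrix.single i i 1 : Matrix (ZMod n) (ZMod n) k)) := by
    have h2 := (Matrix.stdBasis k (ZMod n) (ZMod n)).linearIndependent.comp
      (fun i : ZMod n => (i, i)) (fun i j h => (Prod.mk.injEq _ _ _ _ ▸ h).1)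
    have h3 : ((Matrix.stdBasis k (ZMod n) (ZMod n)) ∘ fun i : ZMod n => (i, i))
        = fun i : ZMod n => (Matrix.single i i 1 : Matrix (ZMod n) (ZMod n) k) := by
      funext i
      exact Matrix.stdBasis_eq_single (R := k) i i
    rwa [h3] at h2
  have h4 : (f.toLinearMap ∘ e)
      = fun i : ZMod n => (Matrix.single i i 1 : Matrix (ZMod n) (ZMod n) k) :=
    funext hfe
  rw [h4]; exact h1

theorem e_injective (hA : IsPreprojectiveAlgebraAn k n A 𝒜 e a s) :
    Function.Injective e := by
  obtain ⟨f, hfe, -, -⟩ := exists_matrix_hom hA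
  intro i j h
  by_contra hne
  have h2 : (Matrix.single i i 1 : Matrix (ZMod n) (ZMod n) k)
      = Matrix.single j j 1 := by rw [← hfe, ← hfe, h]
  have h3 := congrFun (congrFun h2 i) i
  simp [Matrix.single, Ne.symm hne] at h3

theorem e_ne_zero (hA : IsPreprojectiveAlgebraAn k n A 𝒜 e a s) (i : ZMod n) : e i ≠ 0 := by
  obtain ⟨f, hfe, -, -⟩ := exists_matrix_hom hA
  intro h
  have h2 : (Matrix.single i i 1 : Matrix (ZMod n) (ZMod n) k) = 0 := by
    rw [← hfe, h, map_zero]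
  have h3 := congrFun (congrFun h2 i) i
  simp [Matrix.single] at h3

theorem a_ne_zero (hA : IsPreprojectiveAlgebraAn k n A 𝒜 e a s) (i : ZMod n) : a i ≠ 0 := by
  obtain ⟨f, -, hfa, -⟩ := exists_matrix_hom hA
  intro h
  have h2 : (Matrix.single i (i+1) 1 : Matrix (ZMod n) (ZMod n) k) = 0 := by
    rw [← hfa, h, map_zero]
  have h3 := congrFun (congrFun h2 i) (i+1)
  simp [Matrix.single] at h3

end
section
variable {k : Type} [Field k] {n : ℕ} [NeZero n]
variable {A : Type} [Ring A] [Algebra k A] {𝒜 : ℕ → Submodule k A}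
variable {e a s : ZMod n → A}

/-- span of homogeneous monomials of degree `m` -/
def degSpan (k : Type) [Field k] {n : ℕ} (A : Type) [Ring A] [Algebra k A]
    (e a s : ZMod n → A) : ℕ → Submodule k A
  | 0 => Submodule.span k (Set.range e)
  | (m+1) => degSpan k A e a s m * Submodule.span k (Set.range a ∪ Set.range s)

theorem rel_ee (hr : PreprojectiveRelations n e a s) (i j : ZMod n) :
    e i * e j = if i = j then e i else 0 := hr.1 i j

theorem rel_ea (hr : PreprojectiveRelations n e a s) (j i : ZMod n) :
    e j * a i = if j = i then a i else 0 := by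
  have h1 : e j * a i = e j * (e i * a i) := by rw [hr.2.2.1 i]
  rw [h1, ← mul_assoc, rel_ee hr]
  split_ifs with h
  · subst h; rw [hr.2.2.1]
  · rw [zero_mul]

theorem rel_ae (hr : PreprojectiveRelations n e a s) (i l : ZMod n) :
    a i * e l = if l = i + 1 then a i else 0 := by
  have h1 : a i * e l = a i * (e (i+1) * e l) := by
    conv_lhs => rw [← hr.2.2.2.1 i, mul_assoc]
  rw [h1, rel_ee hr]
  split_ifs with h h2 h3
  · exact hr.2.2.2.1 i
  · exact absurd h.symm h2
  · exact absurd h3.symm h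
  · rw [mul_zero]

theorem rel_es (hr : PreprojectiveRelations n e a s) (j i : ZMod n) :
    e j * s i = if j = i + 1 then s i else 0 := by
  have h1 : e j * s i = e j * (e (i+1) * s i) := by rw [hr.2.2.2.2.1 i]
  rw [h1, ← mul_assoc, rel_ee hr]
  split_ifs with h
  · subst h; rw [hr.2.2.2.2.1]
  · rw [zero_mul]

theorem rel_se (hr : PreprojectiveRelations n e a s) (i l : ZMod n) :
    s i * e l = if l = i then s i else 0 := by
  have h1 : s i * e l = s i * (e i * e l) := by
    conv_lhs => rw [← hr.2.2.2.2.2.1 i, mul_assoc]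
  rw [h1, rel_ee hr]
  split_ifs with h h2 h3
  · exact hr.2.2.2.2.2.1 i
  · exact absurd h.symm h2
  · exact absurd h3.symm h
  · rw [mul_zero]

theorem G1_mul_e (hr : PreprojectiveRelations n e a s) {x : A}
    (hx : x ∈ Submodule.span k (Set.range a ∪ Set.range s)) (l : ZMod n) :
    x * e l ∈ Submodule.span k (Set.range a ∪ Set.range s) := by
  induction hx using Submodule.span_induction with
  | mem y hy =>
      rcases hy with ⟨i, rfl⟩ | ⟨i, rfl⟩
      · rw [rel_ae hr]
        split_ifs
        · exact Submodule.subset_span (Or.inl ⟨i, rfl⟩)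
        · exact Submodule.zero_mem _
      · rw [rel_se hr]
        split_ifs
        · exact Submodule.subset_span (Or.inr ⟨i, rfl⟩)
        · exact Submodule.zero_mem _
  | zero => rw [zero_mul]; exact Submodule.zero_mem _
  | add y z _ _ hy hz => rw [add_mul]; exact Submodule.add_mem _ hy hz
  | smul c y _ hy => rw [smul_mul_assoc]; exact Submodule.smul_mem _ c hy


theorem e0_mul_e0 (hr : PreprojectiveRelations n e a s) :
    degSpan k A e a s 0 * degSpan k A e a s 0 ≤ degSpan k A e a s 0 := by
  show Submodule.span k _ * Submodule.span k _ ≤ _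
  rw [Submodule.span_mul_span]
  apply Submodule.span_le.2
  rw [Set.mul_subset_iff]
  rintro x ⟨i, rfl⟩ y ⟨j, rfl⟩
  rw [rel_ee hr]
  split_ifs
  · exact Submodule.subset_span ⟨i, rfl⟩
  · exact Submodule.zero_mem _

theorem G1_mul_e0 (hr : PreprojectiveRelations n e a s) :
    Submodule.span k (Set.range a ∪ Set.range s) * degSpan k A e a s 0 ≤
      Submodule.span k (Set.range a ∪ Set.range s) := by
  show Submodule.span k _ * Submodule.span k _ ≤ _
  rw [Submodule.span_mul_span]
  apply Submodule.span_le.2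
  rw [Set.mul_subset_iff]
  rintro x (⟨i, rfl⟩ | ⟨i, rfl⟩) y ⟨j, rfl⟩
  · rw [rel_ae hr]
    split_ifs
    · exact Submodule.subset_span (Or.inl ⟨i, rfl⟩)
    · exact Submodule.zero_mem _
  · rw [rel_se hr]
    split_ifs
    · exact Submodule.subset_span (Or.inr ⟨i, rfl⟩)
    · exact Submodule.zero_mem _

theorem degSpan_mul_e0 (hr : PreprojectiveRelations n e a s) (m : ℕ) :
    degSpan k A e a s m * degSpan k A e a s 0 ≤ degSpan k A e a s m := by
  cases m with
  | zero => exact e0_mul_e0 hr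
  | succ m =>
      show (degSpan k A e a s m * _) * _ ≤ _
      rw [mul_assoc]
      exact le_trans (mul_le_mul' le_rfl (G1_mul_e0 hr)) le_rfl

theorem degSpan_mul (hr : PreprojectiveRelations n e a s) (i j : ℕ) :
    degSpan k A e a s i * degSpan k A e a s j ≤ degSpan k A e a s (i + j) := by
  induction j with
  | zero => exact degSpan_mul_e0 hr i
  | succ j ih =>
      show degSpan k A e a s i * (degSpan k A e a s j * _) ≤
        degSpan k A e a s (i + j) * _
      rw [← mul_assoc]
      exact mul_le_mul' ih le_rfl

theorem one_mem_degSpan (hr : PreprojectiveRelations n e a s) :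
    (1 : A) ∈ degSpan k A e a s 0 := by
  rw [← hr.2.1]
  exact Submodule.sum_mem _ fun i _ => Submodule.subset_span ⟨i, rfl⟩

theorem a_mem_degSpan (hr : PreprojectiveRelations n e a s) (i : ZMod n) :
    a i ∈ degSpan k A e a s 1 := by
  rw [← hr.2.2.1 i]
  exact Submodule.mul_mem_mul (Submodule.subset_span ⟨i, rfl⟩)
    (Submodule.subset_span (Or.inl ⟨i, rfl⟩))

theorem s_mem_degSpan (hr : PreprojectiveRelations n e a s) (i : ZMod n) :
    s i ∈ degSpan k A e a s 1 := by
  rw [← hr.2.2.2.2.1 i]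
  exact Submodule.mul_mem_mul (Submodule.subset_span ⟨i+1, rfl⟩)
    (Submodule.subset_span (Or.inr ⟨i, rfl⟩))

variable [GradedAlgebra 𝒜]

theorem degSpan_le_grade (hA : IsPreprojectiveAlgebraAn k n A 𝒜 e a s) (m : ℕ) :
    degSpan k A e a s m ≤ 𝒜 m := by
  induction m with
  | zero =>
      apply Submodule.span_le.2
      rintro x ⟨i, rfl⟩
      exact hA.2.1 i
  | succ m ih =>
      show degSpan k A e a s m * _ ≤ _
      have hG : Submodule.span k (Set.range a ∪ Set.range s) ≤ 𝒜 1 := by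
        apply Submodule.span_le.2
        rintro x (⟨i, rfl⟩ | ⟨i, rfl⟩)
        · exact hA.2.2.1 i
        · exact hA.2.2.2.1 i
      refine le_trans (mul_le_mul' ih hG) ?_
      apply Submodule.mul_le.2
      intro x hx y hy
      exact SetLike.mul_mem_graded hx hy

theorem iSup_degSpan (hA : IsPreprojectiveAlgebraAn k n A 𝒜 e a s) :
    (⨆ m, degSpan k A e a s m) = ⊤ := by
  have hr := hA.1
  set p := ⨆ m, degSpan k A e a s m with hp
  have h1 : (1 : A) ∈ p := by
    exact le_iSup (degSpan k A e a s) 0 (one_mem_degSpan hr)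
  have hmul : ∀ x y : A, x ∈ p → y ∈ p → x * y ∈ p := by
    have : p * p ≤ p := by
      rw [hp, Submodule.iSup_mul]
      apply iSup_le
      intro i
      rw [Submodule.mul_iSup]
      apply iSup_le
      intro j
      exact le_trans (degSpan_mul hr i j) (le_iSup _ (i + j))
    intro x y hx hy
    exact this (Submodule.mul_mem_mul hx hy)
  have hsub : Algebra.adjoin k (Set.range e ∪ Set.range a ∪ Set.range s) ≤
      p.toSubalgebra h1 hmul := by
    apply Algebra.adjoin_le
    rintro x ((⟨i, rfl⟩ | ⟨i, rfl⟩) | ⟨i, rfl⟩)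
    · exact le_iSup (degSpan k A e a s) 0 (Submodule.subset_span ⟨i, rfl⟩)
    · exact le_iSup (degSpan k A e a s) 1 (a_mem_degSpan hr i)
    · exact le_iSup (degSpan k A e a s) 1 (s_mem_degSpan hr i)
  rw [hA.2.2.2.2.1] at hsub
  rw [eq_top_iff]
  intro x _
  exact hsub (by trivial)

theorem grade_eq_degSpan (hA : IsPreprojectiveAlgebraAn k n A 𝒜 e a s) (m : ℕ) :
    𝒜 m = degSpan k A e a s m := by
  refine le_antisymm ?_ (degSpan_le_grade hA m)
  intro x hx
  have hQ : (⨆ d, degSpan k A e a s d) ≤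
      (degSpan k A e a s m).comap (GradedAlgebra.proj 𝒜 m) := by
    apply iSup_le
    intro d y hy
    have hy' : y ∈ 𝒜 d := degSpan_le_grade hA d hy
    show GradedAlgebra.proj 𝒜 m y ∈ degSpan k A e a s m
    by_cases hdm : d = m
    · subst hdm
      rw [GradedAlgebra.proj_apply, DirectSum.decompose_of_mem_same 𝒜 hy']
      exact hy
    · rw [GradedAlgebra.proj_apply, DirectSum.decompose_of_mem_ne 𝒜 hy' hdm]
      exact Submodule.zero_mem _
  have hx2 : x ∈ ⨆ d, degSpan k A e a s d := by
    rw [iSup_degSpan hA]; trivial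
  have hx3 := hQ hx2
  rw [Submodule.mem_comap, GradedAlgebra.proj_apply,
    DirectSum.decompose_of_mem_same 𝒜 hx] at hx3
  exact hx3

end
section
variable {k : Type} [Field k] {n : ℕ} [NeZero n]
variable {A : Type} [Ring A] [Algebra k A] {𝒜 : ℕ → Submodule k A}
variable {e a s : ZMod n → A}

theorem e0_mul_G1 (hr : PreprojectiveRelations n e a s) :
    degSpan k A e a s 0 * Submodule.span k (Set.range a ∪ Set.range s) ≤
      Submodule.span k (Set.range a ∪ Set.range s) := by
  show Submodule.span k _ * Submodule.span k _ ≤ _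
  rw [Submodule.span_mul_span]
  apply Submodule.span_le.2
  rw [Set.mul_subset_iff]
  rintro x ⟨j, rfl⟩ y (⟨i, rfl⟩ | ⟨i, rfl⟩)
  · rw [rel_ea hr]
    split_ifs
    · exact Submodule.subset_span (Or.inl ⟨i, rfl⟩)
    · exact Submodule.zero_mem _
  · rw [rel_es hr]
    split_ifs
    · exact Submodule.subset_span (Or.inr ⟨i, rfl⟩)
    · exact Submodule.zero_mem _

theorem sandwich_zero (hr : PreprojectiveRelations n e a s) {x : A}
    (hx : x ∈ Submodule.span k (Set.range a ∪ Set.range s)) (p q : ZMod n)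
    (h1 : q ≠ p + 1) (h2 : q ≠ p - 1) : e p * x * e q = 0 := by
  induction hx using Submodule.span_induction with
  | mem y hy =>
      rcases hy with ⟨i, rfl⟩ | ⟨i, rfl⟩
      · rw [rel_ea hr]
        split_ifs with h
        · subst h
          rw [rel_ae hr, if_neg h1]
        · rw [zero_mul]
      · rw [rel_es hr]
        split_ifs with h
        · subst h
          rw [rel_se hr, if_neg (by simpa [sub_eq_iff_eq_add, eq_comm] using h2)]
        · rw [zero_mul]
  | zero => rw [mul_zero, zero_mul]
  | add y z _ _ hy hz => rw [mul_add, add_mul, hy, hz, add_zero]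
  | smul c y _ hy => rw [mul_smul_comm, smul_mul_assoc, hy, smul_zero]

theorem sum_smul_mul (hr : PreprojectiveRelations n e a s) (c d : ZMod n → k) :
    (∑ j, c j • e j) * (∑ l, d l • e l) = ∑ j, (c j * d j) • e j := by
  rw [Finset.sum_mul_sum]
  apply Finset.sum_congr rfl
  intro j _
  have h1 : ∀ l : ZMod n, (c j • e j) * (d l • e l)
      = if j = l then (c j * d l) • e j else 0 := by
    intro l
    rw [smul_mul_assoc, mul_smul_comm, smul_smul, rel_ee hr]
    split_ifs with h
    · rfl
    · rw [smul_zero]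
  rw [Finset.sum_congr rfl fun l _ => h1 l, Finset.sum_ite_eq]
  simp

theorem coeff_eq (hA : IsPreprojectiveAlgebraAn k n A 𝒜 e a s) (c d : ZMod n → k)
    (h : ∑ j, c j • e j = ∑ j, d j • e j) : ∀ j, c j = d j := by
  have hli := e_linearIndependent hA
  have h0 : ∑ j, (c j - d j) • e j = 0 := by
    simp only [sub_smul, Finset.sum_sub_distrib, h, sub_self]
  intro j
  have h2 := Fintype.linearIndependent_iff.1 hli (fun j => c j - d j) h0 j
  exact sub_eq_zero.1 h2

variable [GradedAlgebra 𝒜]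

/-- every graded automorphism permutes the idempotents by a dihedral symmetry -/
theorem exists_dihedral_perm (hn : 3 ≤ n) (hA : IsPreprojectiveAlgebraAn k n A 𝒜 e a s)
    (g : A ≃ₐ[k] A) (hg : ∀ j, Submodule.map (g : A ≃ₐ[k] A).toLinearMap (𝒜 j) = 𝒜 j) :
    ∃ ρ : Equiv.Perm (ZMod n), (∀ i, g (e i) = e (ρ i)) ∧
      (∀ i, ρ (i + 1) = ρ i + 1 ∨ ρ (i + 1) = ρ i - 1) := by
  have hr := hA.1
  -- g (e i) lies in degree 0 = span of e
  have hge0 : ∀ i, g (e i) ∈ Submodule.span k (Set.range e) := by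
    intro i
    have h1 : g (e i) ∈ 𝒜 0 := by
      rw [← hg 0]
      exact Submodule.mem_map_of_mem (hA.2.1 i)
    rw [grade_eq_degSpan hA 0] at h1
    exact h1
  have hc : ∀ i, ∃ c : ZMod n → k, ∑ j, c j • e j = g (e i) := by
    intro i
    exact (Submodule.mem_span_range_iff_exists_fun k).1 (hge0 i)
  choose c hcspec using hc
  -- idempotency
  have hidem : ∀ i j, c i j * c i j = c i j := by
    intro i j
    have h1 : ∑ l, (c i l * c i l) • e l = ∑ l, c i l • e l := by
      rw [← sum_smul_mul hr (c i) (c i), hcspec i, ← _root_.map_mul, rel_ee hr, if_pos rfl]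
    exact coeff_eq hA _ _ h1 j
  -- orthogonality
  have horth : ∀ i i', i ≠ i' → ∀ j, c i j * c i' j = 0 := by
    intro i i' hne j
    have h1 : ∑ l, (c i l * c i' l) • e l = ∑ l, (0:k) • e l := by
      rw [← sum_smul_mul hr (c i) (c i'), hcspec i, hcspec i', ← _root_.map_mul,
        rel_ee hr, if_neg hne, map_zero]
      simp
    have := coeff_eq hA _ _ h1 j
    simpa using this
  -- sum to one
  have hsum : ∀ j, ∑ i, c i j = 1 := by
    intro j
    have h1 : ∑ l, (∑ i, c i l) • e l = ∑ l, (1:k) • e l := by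
      rw [Finset.sum_congr rfl fun l (_ : l ∈ Finset.univ) => Finset.sum_smul]
      rw [Finset.sum_comm]
      rw [Finset.sum_congr rfl fun i (_ : i ∈ Finset.univ) => hcspec i]
      rw [← map_sum, hr.2.1, _root_.map_one, ← hr.2.1]
      simp
    have := coeff_eq hA _ _ h1 j
    simpa using this
  -- τ j = the unique i with c i j ≠ 0
  have hex : ∀ j, ∃ i, c i j ≠ 0 := by
    intro j
    by_contra hno
    push_neg at hno
    have := hsum j
    rw [Finset.sum_congr rfl fun i _ => hno i] at this
    simp at this
  choose τ hτ using hex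
  have huniq : ∀ j i, c i j ≠ 0 → i = τ j := by
    intro j i hi
    by_contra hne
    exact hi (by
      have := horth i (τ j) hne j
      rcases mul_eq_zero.1 this with h | h
      · exact h
      · exact absurd h (hτ j))
  have hval : ∀ i j, c i j = if i = τ j then 1 else 0 := by
    intro i j
    by_cases h : i = τ j
    · rw [if_pos h]
      have h2 : c i j * (c i j - 1) = 0 := by linear_combination hidem i j
      rcases mul_eq_zero.1 h2 with h0 | h0
      · exact absurd (h ▸ h0) (hτ j)
      · exact sub_eq_zero.1 h0
    · rw [if_neg h]
      by_contra hne
      exact h (huniq j i hne)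
  -- τ is surjective hence bijective
  have hτsurj : Function.Surjective τ := by
    intro i
    by_contra hno
    push_neg at hno
    have h0 : g (e i) = 0 := by
      rw [← hcspec i]
      apply Finset.sum_eq_zero
      intro j _
      rw [hval i j, if_neg (fun h => hno j h.symm), zero_smul]
    exact e_ne_zero hA i (g.injective (h0.trans (map_zero g).symm))
  have hτbij : Function.Bijective τ := Finite.surjective_iff_bijective.1 hτsurj
  set σ := Equiv.ofBijective τ hτbij with hσ
  have hστ : ∀ j, σ j = τ j := fun j => rfl
  have hge : ∀ i, g (e i) = e (σ.symm i) := by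
    intro i
    rw [← hcspec i]
    have hterm : ∀ j : ZMod n, j ∈ Finset.univ → c i j • e j
        = if j = σ.symm i then e j else 0 := by
      intro j _
      have hiff : (i = τ j) ↔ (j = σ.symm i) := by
        constructor
        · intro h
          rw [h, ← hστ, σ.symm_apply_apply]
        · intro h
          rw [h, ← hστ, σ.apply_symm_apply]
      rw [hval i j]
      by_cases h : j = σ.symm i
      · rw [if_pos (hiff.2 h), one_smul, if_pos h]
      · rw [if_neg (fun hh => h (hiff.1 hh)), zero_smul, if_neg h]
    rw [Finset.sum_congr rfl hterm, Finset.sum_ite_eq' Finset.univ (σ.symm i) e]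
    simp
  refine ⟨σ.symm, hge, ?_⟩
  intro i
  by_contra hnot
  push_neg at hnot
  obtain ⟨h1, h2⟩ := hnot
  -- g (a i) lies in degree 1 ⊆ span (a ∪ s)
  have hga : g (a i) ∈ Submodule.span k (Set.range a ∪ Set.range s) := by
    have hmem : g (a i) ∈ 𝒜 1 := by
      rw [← hg 1]
      exact Submodule.mem_map_of_mem (hA.2.2.1 i)
    rw [grade_eq_degSpan hA 1] at hmem
    exact e0_mul_G1 hr hmem
  have hsand : e (σ.symm i) * g (a i) * e (σ.symm (i+1)) = g (a i) := by
    have h3 : e i * a i * e (i+1) = a i := by rw [hr.2.2.1, hr.2.2.2.1]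
    conv_rhs => rw [← h3]
    rw [_root_.map_mul, _root_.map_mul, hge i, hge (i+1)]
  have h0 : g (a i) = 0 := by
    rw [← hsand]
    exact sandwich_zero hr hga _ _ h1 h2
  exact a_ne_zero hA i (g.injective (h0.trans (map_zero g).symm))

/-- a locally ±1 permutation of the cycle is dihedral -/
theorem perm_dihedral {n : ℕ} [NeZero n] (hn : 3 ≤ n) (ρ : Equiv.Perm (ZMod n))
    (h : ∀ i, ρ (i+1) = ρ i + 1 ∨ ρ (i+1) = ρ i - 1) :
    ∃ d : DihedralGroup n, ∀ i, ρ i = dihAct n d i := by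
  have h2 : (2 : ZMod n) ≠ 0 := by
    intro h0
    have h2' : ((2:ℕ) : ZMod n) = 0 := by exact_mod_cast h0
    rw [ZMod.natCast_eq_zero_iff] at h2'
    have := Nat.le_of_dvd (by norm_num) h2'
    omega
  obtain ⟨ε, hε1, hε0, hstep⟩ : ∃ ε : ZMod n, (ε = 1 ∨ ε = -1) ∧ ρ 1 = ρ 0 + ε ∧
      (∀ i, ρ (i+1) = ρ i + ε → ρ (i+1+1) = ρ (i+1) + ε) := by
    rcases h 0 with h0 | h0
    · refine ⟨1, Or.inl rfl, by simpa using h0, ?_⟩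
      intro i hi
      rcases h (i+1) with hstep1 | hstep1
      · exact hstep1
      · exfalso
        have heq : ρ (i+1+1) = ρ i := by rw [hstep1, hi]; ring
        have := ρ.injective heq
        exact h2 (by linear_combination this)
    · refine ⟨-1, Or.inr rfl, by simpa [sub_eq_add_neg] using h0, ?_⟩
      intro i hi
      rcases h (i+1) with hstep1 | hstep1
      · exfalso
        have heq : ρ (i+1+1) = ρ i := by rw [hstep1, hi]; ring
        have := ρ.injective heq
        exact h2 (by linear_combination this)
      · rw [hstep1]; ring
  have hall : ∀ m : ℕ, ρ ((m : ZMod n)) = ρ 0 + (m : ZMod n) * ε ∧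
      ρ ((m : ZMod n) + 1) = ρ ((m : ZMod n)) + ε := by
    intro m
    induction m with
    | zero => exact ⟨by simp, by simpa using hε0⟩
    | succ m ih =>
        have hcast : ((m+1 : ℕ) : ZMod n) = (m : ZMod n) + 1 := by push_cast; ring
        constructor
        · rw [hcast, ih.2, ih.1]; push_cast; ring
        · rw [hcast]
          exact hstep _ ih.2
  have hform : ∀ x : ZMod n, ρ x = ρ 0 + x * ε := by
    intro x
    have hx : ((x.val : ℕ) : ZMod n) = x := ZMod.natCast_rightInverse x
    have := (hall x.val).1
    rwa [hx] at this
  rcases hε1 with rfl | rfl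
  · refine ⟨.r (- ρ 0), fun i => ?_⟩
    rw [hform i, dihAct_r]
    ring
  · refine ⟨.sr (ρ 0), fun i => ?_⟩
    rw [hform i, dihAct_sr]
    ring

end
section
variable {k : Type} [Field k] {n : ℕ} [NeZero n]
variable {A : Type} [Ring A] [Algebra k A] {𝒜 : ℕ → Submodule k A}
variable {e a s : ZMod n → A}

/-- image of the forward arrows under a dihedral symmetry -/
def dihA (d : DihedralGroup n) (a s : ZMod n → A) : ZMod n → A :=
  match d with
  | .r c => fun i => a (i - c)
  | .sr c => fun i => s (c - i - 1)

/-- image of the reverse arrows under a dihedral symmetry -/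
def dihS (d : DihedralGroup n) (a s : ZMod n → A) : ZMod n → A :=
  match d with
  | .r c => fun i => s (i - c)
  | .sr c => fun i => a (c - i - 1)

theorem dihA_r (c i : ZMod n) : dihA (.r c) a s i = a (i - c) := rfl
theorem dihA_sr (c i : ZMod n) : dihA (.sr c) a s i = s (c - i - 1) := rfl
theorem dihS_r (c i : ZMod n) : dihS (.r c) a s i = s (i - c) := rfl
theorem dihS_sr (c i : ZMod n) : dihS (.sr c) a s i = a (c - i - 1) := rfl

theorem dih_relations (hr : PreprojectiveRelations n e a s) (d : DihedralGroup n) :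
    PreprojectiveRelations n (fun i => e (dihAct n d i)) (dihA d a s) (dihS d a s) := by
  obtain ⟨hee, hsum, hea, hae, hes, hse, hrel⟩ := hr
  rcases d with c | c
  · refine ⟨fun i j => ?_, ?_, fun i => ?_, fun i => ?_, fun i => ?_, fun i => ?_, fun i => ?_⟩
    · simp only [dihAct_r]
      rw [hee]
      simp only [sub_left_inj]
    · simp only [dihAct_r]
      exact (Fintype.sum_equiv (Equiv.subRight c) (fun x => e (x - c)) e
        (fun x => rfl)).trans hsum
    · simp only [dihAct_r, dihA_r]
      exact hea _
    · simp only [dihAct_r, dihA_r]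
      rw [show i + 1 - c = i - c + 1 from by ring]
      exact hae _
    · simp only [dihAct_r, dihS_r]
      rw [show i + 1 - c = i - c + 1 from by ring]
      exact hes _
    · simp only [dihAct_r, dihS_r]
      exact hse _
    · simp only [dihA_r, dihS_r]
      rw [show i - 1 - c = i - c - 1 from by ring]
      exact hrel _
  · refine ⟨fun i j => ?_, ?_, fun i => ?_, fun i => ?_, fun i => ?_, fun i => ?_, fun i => ?_⟩
    · simp only [dihAct_sr]
      rw [hee]
      simp only [sub_right_inj]
    · simp only [dihAct_sr]
      exact (Fintype.sum_equiv (Equiv.subLeft c) (fun x => e (c - x)) e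
        (fun x => rfl)).trans hsum
    · simp only [dihAct_sr, dihA_sr]
      have := hes (c - i - 1)
      rwa [show c - i - 1 + 1 = c - i from by ring] at this
    · simp only [dihAct_sr, dihA_sr]
      rw [show c - (i + 1) = c - i - 1 from by ring]
      exact hse _
    · simp only [dihAct_sr, dihS_sr]
      rw [show c - (i + 1) = c - i - 1 from by ring]
      exact hea _
    · simp only [dihAct_sr, dihS_sr]
      have := hae (c - i - 1)
      rwa [show c - i - 1 + 1 = c - i from by ring] at this
    · simp only [dihA_sr, dihS_sr]
      rw [show c - (i - 1) - 1 = c - i from by ring]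
      exact (hrel (c - i)).symm

theorem dih_comp_gen (hA : IsPreprojectiveAlgebraAn k n A 𝒜 e a s)
    (F : DihedralGroup n → (A →ₐ[k] A))
    (hFe : ∀ d i, F d (e i) = e (dihAct n d i))
    (hFa : ∀ d i, F d (a i) = dihA d a s i)
    (hFs : ∀ d i, F d (s i) = dihS d a s i)
    (d d' : DihedralGroup n) : (F d).comp (F d') = F (d * d') := by
  apply AlgHom.ext_of_adjoin_eq_top hA.2.2.2.2.1
  rintro x ((⟨i, rfl⟩ | ⟨i, rfl⟩) | ⟨i, rfl⟩)
  · show F d (F d' (e i)) = F (d * d') (e i)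
    rw [hFe, hFe, hFe, show dihAct n (d * d') = dihAct n d * dihAct n d' from
      map_mul _ _ _, Equiv.Perm.mul_apply]
  · show F d (F d' (a i)) = F (d * d') (a i)
    rcases d with c | c <;> rcases d' with c' | c' <;>
      simp only [hFa, hFs, dihA_r, dihA_sr, dihS_r, dihS_sr, DihedralGroup.r_mul_r,
        DihedralGroup.r_mul_sr, DihedralGroup.sr_mul_r, DihedralGroup.sr_mul_sr] <;>
      congr 1 <;> ring
  · show F d (F d' (s i)) = F (d * d') (s i)
    rcases d with c | c <;> rcases d' with c' | c' <;>
      simp only [hFa, hFs, dihA_r, dihA_sr, dihS_r, dihS_sr, DihedralGroup.r_mul_r,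
        DihedralGroup.r_mul_sr, DihedralGroup.sr_mul_r, DihedralGroup.sr_mul_sr] <;>
      congr 1 <;> ring

theorem dih_one_gen (hA : IsPreprojectiveAlgebraAn k n A 𝒜 e a s)
    (F : DihedralGroup n → (A →ₐ[k] A))
    (hFe : ∀ d i, F d (e i) = e (dihAct n d i))
    (hFa : ∀ d i, F d (a i) = dihA d a s i)
    (hFs : ∀ d i, F d (s i) = dihS d a s i) : F 1 = AlgHom.id k A := by
  apply AlgHom.ext_of_adjoin_eq_top hA.2.2.2.2.1
  rintro x ((⟨i, rfl⟩ | ⟨i, rfl⟩) | ⟨i, rfl⟩)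
  · show F 1 (e i) = e i
    rw [hFe]
    norm_num [show (1 : DihedralGroup n) = .r 0 from rfl, dihAct_r]
  · show F 1 (a i) = a i
    rw [show (1 : DihedralGroup n) = .r 0 from rfl, hFa, dihA_r, sub_zero]
  · show F 1 (s i) = s i
    rw [show (1 : DihedralGroup n) = .r 0 from rfl, hFs, dihS_r, sub_zero]

end
section
variable {k : Type} [Field k] {n : ℕ} [NeZero n]
variable {A : Type} [Ring A] [Algebra k A] {𝒜 : ℕ → Submodule k A}
variable {e a s : ZMod n → A}

theorem dihmap_degSpan (F : A →ₐ[k] A)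
    (hFe : ∀ i, F (e i) = e (dihAct n d i))
    (hFa : ∀ i, F (a i) = dihA d a s i)
    (hFs : ∀ i, F (s i) = dihS d a s i) (j : ℕ) :
    Submodule.map F.toLinearMap (degSpan k A e a s j) ≤ degSpan k A e a s j := by
  induction j with
  | zero =>
      show Submodule.map _ (Submodule.span k _) ≤ _
      rw [Submodule.map_span]
      apply Submodule.span_le.2
      rintro x ⟨y, ⟨i, rfl⟩, rfl⟩
      show F (e i) ∈ _
      rw [hFe]
      exact Submodule.subset_span ⟨_, rfl⟩
  | succ j ih =>
      show Submodule.map _ (degSpan k A e a s j * _) ≤ degSpan k A e a s j * _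
      rw [Submodule.map_mul]
      apply mul_le_mul' ih
      rw [Submodule.map_span]
      apply Submodule.span_le.2
      rintro x ⟨y, (⟨i, rfl⟩ | ⟨i, rfl⟩), rfl⟩
      · show F (a i) ∈ _
        rw [hFa]
        rcases d with c | c
        · exact Submodule.subset_span (Or.inl ⟨_, rfl⟩)
        · exact Submodule.subset_span (Or.inr ⟨_, rfl⟩)
      · show F (s i) ∈ _
        rw [hFs]
        rcases d with c | c
        · exact Submodule.subset_span (Or.inr ⟨_, rfl⟩)
        · exact Submodule.subset_span (Or.inl ⟨_, rfl⟩)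

variable [GradedAlgebra 𝒜]

theorem exists_section (hA : IsPreprojectiveAlgebraAn k n A 𝒜 e a s) :
    ∃ ss : DihedralGroup n →* ↥(gradedAut k A 𝒜),
      ∀ d i, ((ss d : A ≃ₐ[k] A)) (e i) = e (dihAct n d i) := by
  obtain ⟨F, hFe, hFa, hFs⟩ :
      ∃ F : DihedralGroup n → (A →ₐ[k] A),
        (∀ d i, F d (e i) = e (dihAct n d i)) ∧
        (∀ d i, F d (a i) = dihA d a s i) ∧
        (∀ d i, F d (s i) = dihS d a s i) := by
    have h := fun d : DihedralGroup n =>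
      hA.2.2.2.2.2 A _ _ _ (dih_relations hA.1 d)
    choose F hFe hFa hFs using h
    exact ⟨F, hFe, hFa, hFs⟩
  have hcomp := dih_comp_gen hA F hFe hFa hFs
  have hone := dih_one_gen hA F hFe hFa hFs
  have hinv1 : ∀ d, (F d).comp (F d⁻¹) = AlgHom.id k A := fun d => by
    rw [hcomp, mul_inv_cancel, hone]
  have hinv2 : ∀ d, (F d⁻¹).comp (F d) = AlgHom.id k A := fun d => by
    rw [hcomp, inv_mul_cancel, hone]
  let G : DihedralGroup n → (A ≃ₐ[k] A) := fun d =>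
    AlgEquiv.ofAlgHom (F d) (F d⁻¹) (hinv1 d) (hinv2 d)
  have hle : ∀ (d : DihedralGroup n) (j : ℕ),
      Submodule.map (F d).toLinearMap (𝒜 j) ≤ 𝒜 j := by
    intro d j
    rw [grade_eq_degSpan hA j]
    exact dihmap_degSpan (F d) (hFe d) (hFa d) (hFs d) j
  have hgraded : ∀ d, G d ∈ gradedAut k A 𝒜 := by
    intro d j
    have hGF : (G d).toLinearMap = (F d).toLinearMap := rfl
    rw [hGF]
    apply le_antisymm (hle d j)
    intro x hx
    exact ⟨F d⁻¹ x, hle d⁻¹ j ⟨x, hx, rfl⟩, DFunLike.congr_fun (hinv1 d) x⟩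
  refine ⟨MonoidHom.mk' (fun d => ⟨G d, hgraded d⟩) ?_, ?_⟩
  · intro d d'
    apply Subtype.ext
    apply AlgEquiv.ext
    intro x
    exact (DFunLike.congr_fun (hcomp d d') x).symm
  · intro d i
    exact hFe d i

end

variable (k : Type) [Field k] [IsAlgClosed k] [CharZero k]
variable (n : ℕ) [NeZero n]
variable (A : Type) [Ring A] [Algebra k A] (𝒜 : ℕ → Submodule k A) [GradedAlgebra 𝒜]
variable (e a astar : ZMod n → A)

/-- For `A = Π_Q(k)` with `Q = Ã_{n-1}`, the subgroup
`N = {g ∈ Aut_gr(A) : g(eᵢ) = eᵢ}` is normal and of finite index in `Aut_gr(A)`;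
the dihedral group `D_{2n}` acts as the symmetries of the underlying `n`-cycle
permuting the vertices, every graded automorphism permutes the vertex idempotents by
such a dihedral symmetry, and `Aut_gr(A) ≅ D_{2n} ⋉ N`. -/
theorem preprojective_graded_aut_semidirect
    (hn : 3 ≤ n)
    (hA : IsPreprojectiveAlgebraAn k n A 𝒜 e a astar) :
    (vertexFixing k A 𝒜 e).Normal ∧
    (vertexFixing k A 𝒜 e).index ≠ 0 ∧
    ∃ ι : DihedralGroup n →* Equiv.Perm (ZMod n),
      (∀ i x, ι (DihedralGroup.r i) x = x - i) ∧
      (∀ i x, ι (DihedralGroup.sr i) x = i - x) ∧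
      (∀ g : ↥(gradedAut k A 𝒜), ∃ d : DihedralGroup n,
        ∀ i, ((g : A ≃ₐ[k] A)) (e i) = e (ι d i)) ∧
      (∃ φ : DihedralGroup n →* MulAut ↥(vertexFixing k A 𝒜 e),
        Nonempty (↥(gradedAut k A 𝒜) ≃*
          (vertexFixing k A 𝒜 e) ⋊[φ] DihedralGroup n)) := by

  -- every graded automorphism acts on the vertices through a dihedral symmetry
  have hex : ∀ g : ↥(gradedAut k A 𝒜), ∃ d : DihedralGroup n,
      ∀ i, ((g : A ≃ₐ[k] A)) (e i) = e (dihAct n d i) := by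
    intro g
    obtain ⟨ρ, hρ, hloc⟩ := exists_dihedral_perm hn hA (g : A ≃ₐ[k] A) g.2
    obtain ⟨d, hd⟩ := perm_dihedral hn ρ hloc
    exact ⟨d, fun i => by rw [hρ i, hd i]⟩
  have hinj := e_injective hA
  have huniq : ∀ d d' : DihedralGroup n,
      (∀ i, e (dihAct n d i) = e (dihAct n d' i)) → d = d' := by
    intro d d' h
    apply dihAct_injective n hn
    ext x
    exact hinj (h x)
  choose πf hπ using hex
  have hmul : ∀ g h : ↥(gradedAut k A 𝒜), πf (g * h) = πf g * πf h := by
    intro g h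
    apply huniq
    intro i
    rw [← hπ (g * h) i]
    show ((g : A ≃ₐ[k] A)) ((h : A ≃ₐ[k] A) (e i)) = _
    rw [hπ h i, hπ g _, show dihAct n (πf g * πf h) = dihAct n (πf g) * dihAct n (πf h)
      from map_mul _ _ _, Equiv.Perm.mul_apply]
  let π : ↥(gradedAut k A 𝒜) →* DihedralGroup n := MonoidHom.mk' πf hmul
  have hπapp : ∀ g, π g = πf g := fun g => rfl
  obtain ⟨ss, hss⟩ := exists_section hA
  have hπss : ∀ d, π (ss d) = d := fun d =>
    huniq _ _ (fun i => (hπ (ss d) i).symm.trans (hss d i))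
  have hone : ∀ i : ZMod n, dihAct n (1 : DihedralGroup n) i = i := by
    intro i
    rw [_root_.map_one]
    rfl
  -- normality
  have hNormal : (vertexFixing k A 𝒜 e).Normal := by
    refine ⟨fun h hh g i => ?_⟩
    show ((g : A ≃ₐ[k] A)) (((h : ↥(gradedAut k A 𝒜)) : A ≃ₐ[k] A)
      (((g⁻¹ : ↥(gradedAut k A 𝒜)) : A ≃ₐ[k] A) (e i))) = e i
    rw [hπ g⁻¹ i, hh _, ← hπ g⁻¹ i]
    exact ((g : A ≃ₐ[k] A)).apply_symm_apply (e i)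
  refine ⟨hNormal, ?_, ?_⟩
  · -- finite index
    have hker : π.ker = vertexFixing k A 𝒜 e := by
      ext g
      constructor
      · intro hg i
        have h1 := hπ g i
        rw [show πf g = 1 from hg, hone] at h1
        exact h1
      · intro hg
        show πf g = 1
        apply huniq
        intro i
        rw [← hπ g i, hg i, hone]
    haveI : Finite (↥(gradedAut k A 𝒜) ⧸ (vertexFixing k A 𝒜 e)) := by
      rw [← hker]
      exact Finite.of_equiv _ (QuotientGroup.quotientKerEquivRange π).symm.toEquiv
    exact Subgroup.index_ne_zero_of_finite
  · refine ⟨dihAct n, fun i x => rfl, fun i x => rfl, fun g => ⟨πf g, hπ g⟩, ?_⟩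
    haveI := hNormal
    refine ⟨MulAut.conjNormal.comp ss, ?_⟩
    have hcompat : ∀ d : DihedralGroup n,
        (vertexFixing k A 𝒜 e).subtype.comp ((MulAut.conjNormal.comp ss d)).toMonoidHom
        = (MulAut.conj (ss d)).toMonoidHom.comp (vertexFixing k A 𝒜 e).subtype := by
      intro d
      apply MonoidHom.ext
      intro h
      show ((MulAut.conjNormal (ss d)) h : ↥(gradedAut k A 𝒜)) = MulAut.conj (ss d) ↑h
      rw [MulAut.conjNormal_apply, MulAut.conj_apply]
    set Φ := SemidirectProduct.lift (vertexFixing k A 𝒜 e).subtype ss hcompat with hΦdef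
    have hΦ : ∀ x, Φ x = ↑x.left * ss x.right := fun x => rfl
    have hπN : ∀ h : ↥(vertexFixing k A 𝒜 e), π ↑h = 1 := by
      intro h
      rw [hπapp]
      apply huniq
      intro i
      rw [← hπ (↑h) i, h.2 i, hone]
    have hinjΦ : Function.Injective Φ := by
      rw [injective_iff_map_eq_one]
      intro x hx
      have hd : x.right = 1 := by
        have h2 := congrArg π hx
        rw [hΦ, _root_.map_mul, hπN, one_mul, hπss, _root_.map_one] at h2
        exact h2
      have hl : x.left = 1 := by
        have h2 := hx
        rw [hΦ x, hd, _root_.map_one, mul_one] at h2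
        exact_mod_cast h2
      have h3 : x = SemidirectProduct.inl x.left * SemidirectProduct.inr x.right :=
        (SemidirectProduct.inl_left_mul_inr_right x).symm
      rw [h3, hl, hd, _root_.map_one, _root_.map_one, mul_one]
    have hsurjΦ : Function.Surjective Φ := by
      intro g
      have hssinv : ∀ i, (((ss (π g))⁻¹ : ↥(gradedAut k A 𝒜)) : A ≃ₐ[k] A) (e i)
          = e (dihAct n (π g)⁻¹ i) := by
        intro i
        have h2 : πf ((ss (π g))⁻¹) = (π g)⁻¹ := by
          have h3 := map_inv π (ss (π g))
          rw [hπss] at h3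
          exact h3
        rw [← h2]
        exact hπ _ i
      have hmem : g * (ss (π g))⁻¹ ∈ vertexFixing k A 𝒜 e := by
        intro i
        show ((g : A ≃ₐ[k] A)) ((((ss (π g))⁻¹ : ↥(gradedAut k A 𝒜)) : A ≃ₐ[k] A) (e i))
          = e i
        rw [hssinv i, hπ g _, ← hπapp, ← Equiv.Perm.mul_apply, ← _root_.map_mul,
          mul_inv_cancel, hone]
      refine ⟨⟨⟨_, hmem⟩, π g⟩, ?_⟩
      rw [hΦ]
      show (g * (ss (π g))⁻¹) * ss (π g) = g
      exact inv_mul_cancel_right g (ss (π g))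
    exact ⟨(MulEquiv.ofBijective Φ ⟨hinjΦ, hsurjΦ⟩).symm⟩


end
end
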